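/- Let h be a univariate lowpass filter with dilation λ ≥ 2 whose support is contained in {0,1,…,s}, with mask τ(ω) = (1/√λ) Σ_{k=0}^{s} h(k)e^{−ikω} and polyphase vector H(z). Then the function ω ↦ 2 − H*(e^{iλω})H(e^{iλω}) = 2 − Σ_{γ∈Γ*}|τ(ω+γ)|² is a real trigonometric polynomial of the form Σ_{k=−s}^{s} a(k) e^{−ikω}; in particular if it is positive on [−π,π], Fejér–Riesz yields m with m(e^{iλω}) = Σ_{k=0}^{s} b(k)e^{−ikω} and |m(e^{iλω})|² = 2 − H*(e^{iλω})H(e^{iλω}), so the scaled filter associated with m(z)H(z) has support contained in {0,1,…,2s}. -/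

import Mathlib

open Complex Real

/-- The refinement mask `τ(ω) = (1/√λ) Σ_{k=0}^{s} h(k) e^{−ikω}` of a
univariate filter `h` supported in `{0, 1, …, s}` with dilation `λ`. -/
noncomputable def mask1D (lam s : ℕ) (h : Fin (s + 1) → ℝ) (ω : ℝ) : ℂ :=
  ((1 / Real.sqrt lam : ℝ) : ℂ) *
    ∑ k : Fin (s + 1), (h k : ℂ) * Complex.exp (-Complex.I * (k : ℂ) * (ω : ℂ))

/-- The quantity `G(ω) = 2 − H*(e^{iλω})H(e^{iλω}) = 2 − Σ_{γ∈Γ*} |τ(ω+γ)|²`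
with `Γ* = {2πm/λ : m = 0, …, λ−1}` (polyphase identity). -/
noncomputable def G1D (lam s : ℕ) (h : Fin (s + 1) → ℝ) (ω : ℝ) : ℝ :=
  2 - ∑ m ∈ Finset.range lam,
        Complex.normSq (mask1D lam s h (ω + 2 * Real.pi * m / lam))

section FejerRieszHelpers

open Polynomial

lemma rev_X_sub_C' (r : ℂ) (hr : r ≠ 0) :
    (X - C r).reverse = C (-r) * (X - C r⁻¹) := by
  have h1 : (X - C r) = X + C (-r) := by rw [map_neg]; ring
  have h2 : (X : ℂ[X]).reverse = 1 := by
    rw [show (X : ℂ[X]) = 1 * X from (one_mul _).symm, reverse_mul_X, ← C_1, reverse_C]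
  rw [h1, reverse_add_C, h2, natDegree_X, mul_sub, ← C_mul, pow_one,
    neg_mul, mul_inv_cancel₀ hr]
  simp [add_comm, sub_eq_add_neg]

lemma rev_prod (c : ℂ) (M : Multiset ℂ) (h0 : ∀ r ∈ M, r ≠ 0) :
    (C c * (M.map (fun r => X - C r)).prod).reverse
      = C (c * (M.map (fun r => -r)).prod) * (M.map (fun r => X - C r⁻¹)).prod := by
  induction M using Multiset.induction with
  | empty => simp
  | cons r M ih =>
      have hr : r ≠ 0 := h0 r (Multiset.mem_cons_self _ _)
      have ih' := ih (fun x hx => h0 x (Multiset.mem_cons_of_mem hx))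
      simp only [Multiset.map_cons, Multiset.prod_cons]
      rw [show C c * ((X - C r) * (M.map (fun r => X - C r)).prod)
            = (C c * (M.map (fun r => X - C r)).prod) * (X - C r) by ring,
        reverse_mul_of_domain, ih', rev_X_sub_C' r hr]
      simp only [map_mul, map_neg]
      ring

lemma expk (k : ℕ) (ω : ℝ) :
    Complex.exp (-Complex.I * (k : ℂ) * (ω : ℂ)) = Complex.exp (-Complex.I * ω) ^ k := by
  rw [← Complex.exp_nat_mul]; ring_nf

lemma circle_abs (z r : ℂ) (hz : ‖z‖ = 1) (hr : r ≠ 0) :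
    ‖z - (starRingEnd ℂ r)⁻¹‖ = ‖z - r‖ / ‖r‖ := by
  have hz0 : z ≠ 0 := by intro h; rw [h] at hz; simp at hz
  have hcr : (starRingEnd ℂ) r ≠ 0 := by simpa using hr
  have h1 : z - ((starRingEnd ℂ) r)⁻¹ = (z * (starRingEnd ℂ) r - 1) / (starRingEnd ℂ) r := by
    field_simp
  have hcz : (starRingEnd ℂ) z = z⁻¹ := by
    have h3 : z * (starRingEnd ℂ) z = 1 := by
      rw [Complex.mul_conj]
      norm_cast
      rw [← Complex.sq_norm, hz]; norm_num
    exact eq_inv_of_mul_eq_one_left (by rw [mul_comm]; exact h3)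
  have key : (starRingEnd ℂ) (z * (starRingEnd ℂ) r - 1) = z⁻¹ * (r - z) := by
    rw [map_sub, map_mul, hcz, RingHomCompTriple.comp_apply, map_one, RingHom.id_apply,
      mul_sub, inv_mul_cancel₀ hz0]
  have h2 : ‖z * (starRingEnd ℂ) r - 1‖ = ‖z - r‖ := by
    rw [← Complex.norm_conj, key, norm_mul, norm_inv, hz, inv_one, one_mul]
    exact norm_sub_rev r z
  rw [h1, norm_div, h2, Complex.norm_conj]

lemma fr_main (t : ℕ) (a : ℤ → ℝ) (hsym : ∀ n, a (-n) = a n) (hat : a t ≠ 0)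
    (q : ℝ → ℝ)
    (hq : ∀ ω : ℝ, ((q ω : ℝ) : ℂ) = ∑ k ∈ Finset.Icc (-(t : ℤ)) (t : ℤ),
        ((a k : ℝ) : ℂ) * Complex.exp (-Complex.I * (k : ℂ) * (ω : ℂ)))
    (hpos : ∀ ω : ℝ, 0 < q ω) :
    ∃ b : ℕ → ℂ, ∀ ω : ℝ, Complex.normSq (∑ k ∈ Finset.range (t + 1),
        b k * Complex.exp (-Complex.I * (k : ℂ) * (ω : ℂ))) = q ω := by
  classical
  set P : ℂ[X] := ∑ j ∈ Finset.range (2 * t + 1), C ((a ((j : ℤ) - t) : ℝ) : ℂ) * X ^ j with hP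
  have hcoeff : ∀ n : ℕ, P.coeff n = if n ≤ 2 * t then ((a ((n : ℤ) - t) : ℝ) : ℂ) else 0 := by
    intro n
    rw [hP, finset_sum_coeff]
    simp only [coeff_C_mul, coeff_X_pow, mul_ite, mul_one, mul_zero]
    simp [Finset.sum_ite_eq', Finset.mem_range, Nat.lt_succ_iff]
  have hctop : P.coeff (2 * t) = ((a t : ℝ) : ℂ) := by
    rw [hcoeff]
    simp only [le_refl, if_pos]
    congr 2
    push_cast
    ring
  have hP0 : P ≠ 0 := by
    intro h
    rw [h, coeff_zero] at hctop
    exact hat (by exact_mod_cast hctop.symm)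
  have hdeg : P.natDegree = 2 * t := by
    apply le_antisymm
    · rw [natDegree_le_iff_coeff_eq_zero]
      intro m hm
      rw [hcoeff]
      simp [Nat.not_le.2 hm, hm.not_ge]
    · exact le_natDegree_of_ne_zero (by rw [hctop]; exact_mod_cast hat)
  -- eval on the unit circle
  have heval : ∀ ω : ℝ, P.eval (Complex.exp (-Complex.I * ω))
      = Complex.exp (-Complex.I * ω) ^ t * ((q ω : ℝ) : ℂ) := by
    intro ω
    rw [hq ω, Finset.mul_sum, hP, eval_finset_sum]
    simp only [eval_mul, eval_C, eval_pow, eval_X]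
    refine Finset.sum_nbij' (i := fun (j : ℕ) => (j : ℤ) - t)
      (j := fun (k : ℤ) => (k + t).toNat) ?_ ?_ ?_ ?_ ?_
    · intro j hj
      simp only [Finset.mem_range, Nat.lt_succ_iff] at hj
      simp only [Finset.mem_Icc]
      omega
    · intro k hk
      simp only [Finset.mem_Icc] at hk
      simp only [Finset.mem_range, Nat.lt_succ_iff]
      omega
    · intro j hj
      simp only [Finset.mem_range, Nat.lt_succ_iff] at hj
      show (((j : ℤ) - t) + t).toNat = j
      omega
    · intro k hk
      simp only [Finset.mem_Icc] at hk
      show (((k + (t : ℤ)).toNat : ℕ) : ℤ) - t = k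
      omega
    · intro j hj
      simp only [Finset.mem_range, Nat.lt_succ_iff] at hj
      rw [mul_comm (Complex.exp (-Complex.I * ω) ^ t), mul_assoc]
      congr 1
      rw [← Complex.exp_nat_mul, ← Complex.exp_nat_mul, ← Complex.exp_add]
      congr 1
      push_cast
      ring
  -- roots
  set M : Multiset ℂ := P.roots with hM
  have hsplits : P.Splits := IsAlgClosed.splits P
  have hcard : Multiset.card M = 2 * t := by
    rw [hM, (Polynomial.splits_iff_card_roots).1 hsplits, hdeg]
  have habs1 : ∀ ω : ℝ, ‖Complex.exp (-Complex.I * ω)‖ = 1 := by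
    intro ω
    rw [Complex.norm_exp]
    norm_num [Complex.mul_re, Complex.neg_re, Complex.neg_im, Complex.I_re, Complex.I_im,
      Complex.ofReal_re, Complex.ofReal_im]
  have hmem : ∀ r ∈ M, r ≠ 0 ∧ ‖r‖ ≠ 1 := by
    intro r hr
    have hroot : P.eval r = 0 := isRoot_of_mem_roots hr
    constructor
    · intro h0
      rw [h0, ← coeff_zero_eq_eval_zero, hcoeff] at hroot
      simp only [Nat.zero_le, if_pos] at hroot
      have : a (0 - (t : ℤ)) = 0 := by exact_mod_cast hroot
      rw [zero_sub, hsym] at this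
      exact hat this
    · intro habs
      have hr' : r = Complex.exp (-Complex.I * ((-(Complex.arg r) : ℝ) : ℂ)) := by
        conv_lhs => rw [← Complex.norm_mul_exp_arg_mul_I r]
        rw [habs]
        push_cast
        rw [one_mul]
        congr 1
        ring
      rw [hr', heval (-(Complex.arg r))] at hroot
      have h1 : Complex.exp (-Complex.I * ((-(Complex.arg r) : ℝ) : ℂ)) ^ t ≠ 0 :=
        pow_ne_zero _ (Complex.exp_ne_zero _)
      have h2 : ((q (-(Complex.arg r)) : ℝ) : ℂ) ≠ 0 :=
        Complex.ofReal_ne_zero.2 (hpos _).ne'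
      exact (mul_ne_zero h1 h2) hroot
  have hprodP : P = C P.leadingCoeff * (M.map (fun r => X - C r)).prod :=
    hsplits.eq_prod_roots
  have hrev : P.reverse = P := by
    ext n
    by_cases hn : n ≤ 2 * t
    · rw [coeff_reverse, hdeg, revAt_le hn, hcoeff, hcoeff]
      simp only [Nat.sub_le, if_pos, hn]
      have h2 : ((2 * t - n : ℕ) : ℤ) - t = -((n : ℤ) - t) := by
        rw [Nat.cast_sub hn]; push_cast; ring
      rw [h2, hsym]
    · have h1 : P.reverse.coeff n = 0 := by
        apply coeff_eq_zero_of_natDegree_lt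
        calc P.reverse.natDegree ≤ P.natDegree := reverse_natDegree_le P
          _ = 2 * t := hdeg
          _ < n := Nat.not_le.1 hn
      have h2 : P.coeff n = 0 := by rw [hcoeff]; simp [hn]
      rw [h1, h2]
  have hconjP : P.map (starRingEnd ℂ) = P := by
    ext n
    rw [coeff_map, hcoeff]
    split_ifs
    · exact Complex.conj_ofReal _
    · exact map_zero _
  have hMconj : M.map (starRingEnd ℂ) = M := by
    have h1 := hsplits.roots_map (starRingEnd ℂ)
    rw [hconjP] at h1
    exact h1.symm
  have hMinv : M.map (fun r => r⁻¹) = M := by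
    have h1 := rev_prod P.leadingCoeff M (fun r hr => (hmem r hr).1)
    rw [← hprodP, hrev] at h1
    have hc0 : P.leadingCoeff * (M.map (fun r => -r)).prod ≠ 0 := by
      refine mul_ne_zero (leadingCoeff_ne_zero.2 hP0) (Multiset.prod_ne_zero ?_)
      intro h0
      obtain ⟨r, hr, hr0⟩ := Multiset.mem_map.1 h0
      exact (hmem r hr).1 (neg_eq_zero.1 hr0)
    have h2 : ((M.map (fun r => X - C r⁻¹)).prod).roots = M.map (fun r => r⁻¹) := by
      rw [show M.map (fun r => X - C r⁻¹) = (M.map (fun r => r⁻¹)).map (fun r => X - C r) by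
        rw [Multiset.map_map]; rfl]
      exact roots_multiset_prod_X_sub_C _
    have h3 : M = M.map (fun r => r⁻¹) := by
      conv_lhs => rw [hM, h1]
      rw [roots_C_mul _ hc0]
      exact h2
    exact h3.symm
  have hMg : M.map (fun r => ((starRingEnd ℂ) r)⁻¹) = M := by
    calc M.map (fun r => ((starRingEnd ℂ) r)⁻¹)
        = (M.map (starRingEnd ℂ)).map (fun r => r⁻¹) := by rw [Multiset.map_map]; rfl
      _ = M := by rw [hMconj, hMinv]
  -- split roots into inside / outside
  set Mi : Multiset ℂ := M.filter (fun r => ‖r‖ < 1) with hMi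
  set Mo : Multiset ℂ := M.filter (fun r => ¬ ‖r‖ < 1) with hMo
  have hsplitM : Mi + Mo = M := Multiset.filter_add_not _ M
  have hMoMi : Mo = Mi.map (fun r => ((starRingEnd ℂ) r)⁻¹) := by
    conv_lhs => rw [hMo, ← hMg]
    rw [Multiset.filter_map]
    congr 1
    rw [hMi]
    apply Multiset.filter_congr
    intro r hrM
    obtain ⟨hr0, hr1⟩ := hmem r hrM
    have hrpos : 0 < ‖r‖ := norm_pos_iff.2 hr0
    simp only [Function.comp_apply, norm_inv, Complex.norm_conj]
    rw [inv_lt_one₀ hrpos, not_lt]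
    exact ⟨fun hle => lt_of_le_of_ne hle hr1, le_of_lt⟩
  have hcardMi : Multiset.card Mi = t := by
    have h1 : Multiset.card Mi + Multiset.card Mo = 2 * t := by
      rw [← Multiset.card_add, hsplitM, hcard]
    rw [hMoMi, Multiset.card_map] at h1
    omega
  -- the spectral factor
  set c : ℂ := P.leadingCoeff with hc
  have hc0 : c ≠ 0 := leadingCoeff_ne_zero.2 hP0
  set R : ℝ := (Mi.map (fun r => ‖r‖)).prod with hRdef
  have hR : 0 < R := by
    rw [hRdef]
    apply Multiset.prod_pos
    intro x hx
    obtain ⟨r, hr, rfl⟩ := Multiset.mem_map.1 hx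
    exact norm_pos_iff.2 (hmem r (Multiset.mem_of_mem_filter hr)).1
  set K : ℝ := ‖c‖ / R with hKdef
  have hK : 0 < K := div_pos (norm_pos_iff.2 hc0) hR
  set B : ℂ[X] := C ((Real.sqrt K : ℝ) : ℂ) * (Mi.map (fun r => X - C r)).prod with hB
  have hdegB : B.natDegree ≤ t := by
    calc B.natDegree ≤ ((Mi.map (fun r => X - C r)).prod).natDegree := natDegree_C_mul_le _ _
      _ = Multiset.card Mi := natDegree_multiset_prod_X_sub_C_eq_card _
      _ = t := hcardMi
  refine ⟨fun k => B.coeff k, fun ω => ?_⟩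
  set z : ℂ := Complex.exp (-Complex.I * ω) with hz
  have habsz : ‖z‖ = 1 := habs1 ω
  have hsum : ∑ k ∈ Finset.range (t + 1), B.coeff k * Complex.exp (-Complex.I * (k : ℂ) * ω)
      = B.eval z := by
    rw [eval_eq_sum_range' (lt_of_le_of_lt hdegB (Nat.lt_succ_self t))]
    exact Finset.sum_congr rfl fun k _ => by rw [expk k ω]
  rw [hsum]
  -- compute normSq of B.eval z
  have hevalB : B.eval z = ((Real.sqrt K : ℝ) : ℂ) * (Mi.map (fun r => z - r)).prod := by
    rw [hB, eval_mul, eval_C, eval_multiset_prod, Multiset.map_map]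
    congr 1
    exact congrArg Multiset.prod (Multiset.map_congr rfl fun r _ => by
      show eval z (X - C r) = z - r
      simp)
  have hnB : Complex.normSq (B.eval z)
      = K * (Mi.map (fun r => Complex.normSq (z - r))).prod := by
    rw [hevalB, map_mul, Complex.normSq_ofReal, Real.mul_self_sqrt hK.le,
      map_multiset_prod Complex.normSq, Multiset.map_map]
    rfl
  set Pi2 : ℝ := (Mi.map (fun r => Complex.normSq (z - r))).prod with hPi2def
  have hPi2 : 0 ≤ Pi2 := by
    rw [hPi2def]
    apply Multiset.prod_nonneg
    intro x hx
    obtain ⟨r, _, rfl⟩ := Multiset.mem_map.1 hx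
    exact Complex.normSq_nonneg _
  -- key identity: q ω ^ 2 = (K * Pi2) ^ 2
  have hq2 : q ω ^ 2 = (K * Pi2) ^ 2 := by
    have e1 : (q ω) ^ 2 = Complex.normSq (P.eval z) := by
      rw [hz, heval ω, map_mul, map_pow]
      rw [Complex.normSq_ofReal]
      have : Complex.normSq (Complex.exp (-Complex.I * ω)) = 1 := by
        have := habs1 ω
        rw [← Complex.sq_norm, this]; norm_num
      rw [this]
      ring
    have e2 : Complex.normSq (P.eval z) = Complex.normSq c * ((M.map (fun r => Complex.normSq (z - r))).prod) := by
      conv_lhs => rw [hprodP]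
      rw [eval_mul, eval_C, eval_multiset_prod, Multiset.map_map, map_mul,
        map_multiset_prod Complex.normSq, Multiset.map_map]
      congr 1
      exact congrArg Multiset.prod (Multiset.map_congr rfl fun r _ => by
        show Complex.normSq (eval z (X - C r)) = Complex.normSq (z - r)
        simp)
    have e3 : (M.map (fun r => Complex.normSq (z - r))).prod
        = Pi2 * ((Mo.map (fun r => Complex.normSq (z - r))).prod) := by
      rw [← hsplitM, Multiset.map_add, Multiset.prod_add]
    have e4 : (Mo.map (fun r => Complex.normSq (z - r))).prod
        = Pi2 / ((Mi.map (fun r => Complex.normSq r)).prod) := by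
      rw [hMoMi, Multiset.map_map]
      rw [show Multiset.map ((fun r => Complex.normSq (z - r)) ∘ fun r => ((starRingEnd ℂ) r)⁻¹) Mi
          = Multiset.map (fun r => Complex.normSq (z - r) / Complex.normSq r) Mi from
        Multiset.map_congr rfl fun r hr => ?_]
      · rw [Multiset.prod_map_div]
      · have hr0 : r ≠ 0 := (hmem r (Multiset.mem_of_mem_filter hr)).1
        have := circle_abs z r habsz hr0
        simp only [Function.comp_apply]
        rw [← Complex.sq_norm, ← Complex.sq_norm, ← Complex.sq_norm, this, div_pow]
    have e5 : (Mi.map (fun r => Complex.normSq r)).prod = R ^ 2 := by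
      rw [hRdef, ← Multiset.prod_map_pow]
      congr 1
      exact Multiset.map_congr rfl fun r _ => (Complex.sq_norm r).symm
    have e6 : Complex.normSq c = ‖c‖ ^ 2 := (Complex.sq_norm c).symm
    rw [e1, e2, e3, e4, e5, e6, hKdef]
    field_simp
  -- conclude
  have hfinal : q ω = K * Pi2 := by
    have h0 : (q ω - K * Pi2) * (q ω + K * Pi2) = 0 := by nlinarith [hq2]
    rcases mul_eq_zero.1 h0 with h | h
    · linarith
    · nlinarith [hpos ω, mul_nonneg hK.le hPi2]
  rw [hnB]
  exact hfinal.symm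

lemma fejer_riesz : ∀ (s : ℕ) (a : ℤ → ℝ), (∀ n, a (-n) = a n) →
    ∀ q : ℝ → ℝ, (∀ ω : ℝ, ((q ω : ℝ) : ℂ) = ∑ k ∈ Finset.Icc (-(s : ℤ)) (s : ℤ),
        ((a k : ℝ) : ℂ) * Complex.exp (-Complex.I * (k : ℂ) * (ω : ℂ))) →
    (∀ ω : ℝ, 0 < q ω) →
    ∃ b : ℕ → ℂ, ∀ ω : ℝ, Complex.normSq (∑ k ∈ Finset.range (s + 1),
        b k * Complex.exp (-Complex.I * (k : ℂ) * (ω : ℂ))) = q ω := by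
  intro s
  induction s with
  | zero =>
      intro a hsym q hq hpos
      by_cases h0 : a 0 = 0
      · exfalso
        have h1 := hq 0
        simp [h0] at h1
        exact (hpos 0).ne' h1
      · exact fr_main 0 a hsym (by simpa using h0) q hq hpos
  | succ s ih =>
      intro a hsym q hq hpos
      by_cases hsz : a ((s : ℤ) + 1) = 0
      · have hq' : ∀ ω : ℝ, ((q ω : ℝ) : ℂ) = ∑ k ∈ Finset.Icc (-(s : ℤ)) (s : ℤ),
            ((a k : ℝ) : ℂ) * Complex.exp (-Complex.I * (k : ℂ) * (ω : ℂ)) := by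
          intro ω
          rw [hq ω]
          symm
          apply Finset.sum_subset
          · intro k hk
            simp only [Finset.mem_Icc] at hk ⊢
            push_cast
            omega
          · intro k hk1 hk2
            simp only [Finset.mem_Icc] at hk1 hk2
            push_cast at hk1
            have : k = (s : ℤ) + 1 ∨ k = -((s : ℤ) + 1) := by omega
            rcases this with rfl | rfl
            · rw [hsz]; simp
            · rw [hsym, hsz]; simp
        obtain ⟨b, hb⟩ := ih a hsym q hq' hpos
        refine ⟨fun k => if k = s + 1 then 0 else b k, fun ω => ?_⟩
        rw [Finset.sum_range_succ]
        simp only [eq_self_iff_true, if_true, zero_mul, add_zero]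
        rw [show (∑ k ∈ Finset.range (s + 1),
              (if k = s + 1 then (0 : ℂ) else b k) * Complex.exp (-Complex.I * (k : ℂ) * (ω : ℂ)))
            = ∑ k ∈ Finset.range (s + 1), b k * Complex.exp (-Complex.I * (k : ℂ) * (ω : ℂ)) from
          Finset.sum_congr rfl fun k hk => by
            rw [Finset.mem_range] at hk
            rw [if_neg (by omega)]]
        exact hb ω
      · exact fr_main (s + 1) a hsym (by push_cast; exact hsz) q hq hpos

lemma geom_sum_dvd (lam : ℕ) (hlam : 2 ≤ lam) (n : ℤ) :
    ∑ m ∈ Finset.range lam,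
        Complex.exp (-Complex.I * (n : ℂ) * ((2 * Real.pi * m / lam : ℝ) : ℂ))
      = if (lam : ℤ) ∣ n then (lam : ℂ) else 0 := by
  have hlam0 : (lam : ℂ) ≠ 0 := by
    exact_mod_cast Nat.cast_ne_zero.2 (by omega)
  have hterm : ∀ m : ℕ, Complex.exp (-Complex.I * (n : ℂ) * ((2 * Real.pi * m / lam : ℝ) : ℂ))
      = Complex.exp (-Complex.I * n * (2 * Real.pi / lam)) ^ m := by
    intro m
    rw [← Complex.exp_nat_mul]
    congr 1
    push_cast
    ring
  set ζ : ℂ := Complex.exp (-Complex.I * n * (2 * Real.pi / lam)) with hζ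
  simp only [hterm]
  by_cases hdvd : (lam : ℤ) ∣ n
  · obtain ⟨d, rfl⟩ := hdvd
    have hζ1 : ζ = 1 := by
      rw [hζ]
      have heq : (-Complex.I * (((lam : ℤ) * d : ℤ) : ℂ) * (2 * Real.pi / lam)) = ((-d : ℤ) : ℂ) * (2 * Real.pi * Complex.I) := by
        push_cast
        field_simp
      rw [heq, Complex.exp_int_mul_two_pi_mul_I]
    rw [if_pos (dvd_mul_right ((lam : ℤ)) d)]
    simp [hζ1]
  · rw [if_neg hdvd]
    have hζlam : ζ ^ lam = 1 := by
      rw [hζ, ← Complex.exp_nat_mul]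
      have heq : ((lam : ℂ) * (-Complex.I * n * (2 * Real.pi / lam))) = ((-n : ℤ) : ℂ) * (2 * Real.pi * Complex.I) := by
        push_cast
        field_simp
      rw [heq, Complex.exp_int_mul_two_pi_mul_I]
    have hζ1 : ζ ≠ 1 := by
      intro h1
      rw [hζ, Complex.exp_eq_one_iff] at h1
      obtain ⟨k, hk⟩ := h1
      apply hdvd
      have hπ : (Real.pi : ℂ) ≠ 0 := by exact_mod_cast Real.pi_ne_zero
      have hIC : Complex.I ≠ 0 := Complex.I_ne_zero
      have h2 : ((-(n : ℂ)) / lam) * (2 * Real.pi * Complex.I) = (k : ℂ) * (2 * Real.pi * Complex.I) := by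
        rw [← hk]; ring
      have h3 : (-(n : ℂ)) / lam = (k : ℂ) :=
        mul_right_cancel₀ (mul_ne_zero (mul_ne_zero two_ne_zero hπ) hIC) h2
      rw [div_eq_iff hlam0] at h3
      have h4 : -n = k * lam := by exact_mod_cast h3
      exact ⟨-k, by linear_combination -h4⟩
    rw [geom_sum_eq hζ1, hζlam]
    simp

lemma mask_sq (lam s : ℕ) (hlam : 2 ≤ lam) (h : Fin (s + 1) → ℝ) (x : ℝ) :
    ((Complex.normSq (mask1D lam s h x) : ℝ) : ℂ)
      = ((lam : ℂ))⁻¹ * ∑ p : Fin (s + 1) × Fin (s + 1),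
          ((h p.1 : ℂ) * (h p.2 : ℂ)) *
            Complex.exp (-Complex.I * ((((p.1 : ℕ) : ℤ) - ((p.2 : ℕ) : ℤ) : ℤ) : ℂ) * (x : ℂ)) := by
  have hlamK : (0 : ℝ) < lam := by
    have : (0 : ℕ) < lam := by omega
    exact_mod_cast this
  rw [← Complex.mul_conj]
  unfold mask1D
  rw [map_mul, map_sum]
  have hc1 : (starRingEnd ℂ) (((1 / Real.sqrt lam : ℝ) : ℂ)) = ((1 / Real.sqrt lam : ℝ) : ℂ) :=
    Complex.conj_ofReal _
  rw [hc1]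
  have hsq : ((1 / Real.sqrt lam : ℝ) : ℂ) * ((1 / Real.sqrt lam : ℝ) : ℂ) = ((lam : ℂ))⁻¹ := by
    rw [← Complex.ofReal_mul]
    rw [show (1 / Real.sqrt lam) * (1 / Real.sqrt lam) = 1 / (Real.sqrt lam * Real.sqrt lam) by
      ring]
    rw [Real.mul_self_sqrt hlamK.le]
    push_cast
    rw [one_div]
  rw [show (((1 / Real.sqrt lam : ℝ) : ℂ) * ∑ k : Fin (s + 1), (h k : ℂ) *
        Complex.exp (-Complex.I * (k : ℂ) * (x : ℂ))) *
      (((1 / Real.sqrt lam : ℝ) : ℂ) * ∑ k : Fin (s + 1),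
        (starRingEnd ℂ) ((h k : ℂ) * Complex.exp (-Complex.I * (k : ℂ) * (x : ℂ))))
      = (((1 / Real.sqrt lam : ℝ) : ℂ) * ((1 / Real.sqrt lam : ℝ) : ℂ)) *
        ((∑ k : Fin (s + 1), (h k : ℂ) * Complex.exp (-Complex.I * (k : ℂ) * (x : ℂ))) *
         (∑ k : Fin (s + 1),
           (starRingEnd ℂ) ((h k : ℂ) * Complex.exp (-Complex.I * (k : ℂ) * (x : ℂ))))) by ring,
    hsq]
  congr 1
  rw [Finset.sum_mul_sum]
  rw [← Finset.sum_product']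
  refine Finset.sum_congr rfl fun p _ => ?_
  rw [map_mul, Complex.conj_ofReal, ← Complex.exp_conj]
  have harg : (starRingEnd ℂ) (-Complex.I * ((p.2 : ℕ) : ℂ) * (x : ℂ))
      = Complex.I * ((p.2 : ℕ) : ℂ) * (x : ℂ) := by
    rw [map_mul, map_mul, map_neg, Complex.conj_I]
    rw [show ((((p.2 : ℕ) : ℂ)) : ℂ) = (((p.2 : ℕ) : ℝ) : ℂ) by push_cast; ring]
    rw [Complex.conj_ofReal, Complex.conj_ofReal]
    push_cast
    ring
  rw [harg]
  have hsplit : Complex.exp (-Complex.I * ((((p.1 : ℕ) : ℤ) - ((p.2 : ℕ) : ℤ) : ℤ) : ℂ) * (x : ℂ))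
      = Complex.exp (-Complex.I * ((p.1 : ℕ) : ℂ) * (x : ℂ)) *
        Complex.exp (Complex.I * ((p.2 : ℕ) : ℂ) * (x : ℂ)) := by
    rw [← Complex.exp_add]
    congr 1
    push_cast
    ring
  rw [hsplit]
  ring

noncomputable def aCoef (lam s : ℕ) (h : Fin (s + 1) → ℝ) (n : ℤ) : ℝ :=
  (if n = 0 then 2 else 0) -
    ∑ p ∈ Finset.univ.filter (fun p : Fin (s + 1) × Fin (s + 1) =>
        ((p.1 : ℕ) : ℤ) - ((p.2 : ℕ) : ℤ) = n ∧ (lam : ℤ) ∣ n), h p.1 * h p.2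

lemma aCoef_symm (lam s : ℕ) (h : Fin (s + 1) → ℝ) (n : ℤ) :
    aCoef lam s h (-n) = aCoef lam s h n := by
  unfold aCoef
  congr 1
  · simp [neg_eq_zero]
  · refine Finset.sum_nbij' (i := Prod.swap) (j := Prod.swap) ?_ ?_ ?_ ?_ ?_
    · intro p hp
      simp only [Finset.mem_filter, Finset.mem_univ, true_and] at hp ⊢
      obtain ⟨h1, h2⟩ := hp
      exact ⟨by simp [Prod.swap]; omega, (dvd_neg).1 h2⟩
    · intro p hp
      simp only [Finset.mem_filter, Finset.mem_univ, true_and] at hp ⊢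
      obtain ⟨h1, h2⟩ := hp
      exact ⟨by simp [Prod.swap]; omega, (dvd_neg).2 h2⟩
    · intro p _; rfl
    · intro p _; rfl
    · intro p _
      simp [Prod.swap, mul_comm]

lemma sum_normSq_eq (lam s : ℕ) (hlam : 2 ≤ lam) (h : Fin (s + 1) → ℝ) (ω : ℝ) :
    ((∑ m ∈ Finset.range lam,
        Complex.normSq (mask1D lam s h (ω + 2 * Real.pi * m / lam)) : ℝ) : ℂ)
      = ∑ p : Fin (s + 1) × Fin (s + 1),
          (if (lam : ℤ) ∣ (((p.1 : ℕ) : ℤ) - ((p.2 : ℕ) : ℤ)) then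
            ((h p.1 : ℂ) * (h p.2 : ℂ)) *
              Complex.exp (-Complex.I * ((((p.1 : ℕ) : ℤ) - ((p.2 : ℕ) : ℤ) : ℤ) : ℂ) * (ω : ℂ))
          else 0) := by
  have hlam0 : (lam : ℂ) ≠ 0 := Nat.cast_ne_zero.2 (by omega)
  calc ((∑ m ∈ Finset.range lam,
        Complex.normSq (mask1D lam s h (ω + 2 * Real.pi * m / lam)) : ℝ) : ℂ)
      = ∑ m ∈ Finset.range lam,
          ((Complex.normSq (mask1D lam s h (ω + 2 * Real.pi * m / lam)) : ℝ) : ℂ) := by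
        push_cast; rfl
    _ = ∑ m ∈ Finset.range lam, ((lam : ℂ))⁻¹ * ∑ p : Fin (s + 1) × Fin (s + 1),
          ((h p.1 : ℂ) * (h p.2 : ℂ)) *
            Complex.exp (-Complex.I * ((((p.1 : ℕ) : ℤ) - ((p.2 : ℕ) : ℤ) : ℤ) : ℂ) *
              ((ω + 2 * Real.pi * m / lam : ℝ) : ℂ)) :=
        Finset.sum_congr rfl fun m _ => mask_sq lam s hlam h _
    _ = ((lam : ℂ))⁻¹ * ∑ p : Fin (s + 1) × Fin (s + 1),
          ((h p.1 : ℂ) * (h p.2 : ℂ)) * ∑ m ∈ Finset.range lam,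
            Complex.exp (-Complex.I * ((((p.1 : ℕ) : ℤ) - ((p.2 : ℕ) : ℤ) : ℤ) : ℂ) *
              ((ω + 2 * Real.pi * m / lam : ℝ) : ℂ)) := by
        rw [← Finset.mul_sum]
        congr 1
        rw [Finset.sum_comm]
        exact Finset.sum_congr rfl fun p _ => (Finset.mul_sum _ _ _).symm
    _ = _ := by
        rw [Finset.mul_sum]
        refine Finset.sum_congr rfl fun p _ => ?_
        set n : ℤ := ((p.1 : ℕ) : ℤ) - ((p.2 : ℕ) : ℤ) with hn
        have hsplit : ∀ m : ℕ,
            Complex.exp (-Complex.I * (n : ℂ) * ((ω + 2 * Real.pi * m / lam : ℝ) : ℂ))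
              = Complex.exp (-Complex.I * (n : ℂ) * ((2 * Real.pi * m / lam : ℝ) : ℂ)) *
                Complex.exp (-Complex.I * (n : ℂ) * (ω : ℂ)) := by
          intro m
          rw [← Complex.exp_add]
          congr 1
          push_cast
          ring
        rw [Finset.sum_congr rfl fun m _ => hsplit m, ← Finset.sum_mul, geom_sum_dvd lam hlam n]
        split_ifs with hdvd
        · rw [show ((lam : ℂ))⁻¹ * (((h p.1 : ℂ) * (h p.2 : ℂ)) * ((lam : ℂ) *
              Complex.exp (-Complex.I * (n : ℂ) * (ω : ℂ))))
            = ((lam : ℂ)⁻¹ * lam) * (((h p.1 : ℂ) * (h p.2 : ℂ)) *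
              Complex.exp (-Complex.I * (n : ℂ) * (ω : ℂ))) by ring,
            inv_mul_cancel₀ hlam0, one_mul]
        · simp

lemma G1D_eq (lam s : ℕ) (hlam : 2 ≤ lam) (h : Fin (s + 1) → ℝ) (ω : ℝ) :
    ((G1D lam s h ω : ℝ) : ℂ)
      = ∑ k ∈ Finset.Icc (-(s : ℤ)) (s : ℤ),
          ((aCoef lam s h k : ℝ) : ℂ) * Complex.exp (-Complex.I * (k : ℂ) * (ω : ℂ)) := by
  classical
  unfold G1D
  rw [Complex.ofReal_sub, sum_normSq_eq lam s hlam h ω]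
  symm
  have hterm : ∀ k : ℤ, ((aCoef lam s h k : ℝ) : ℂ) * Complex.exp (-Complex.I * (k : ℂ) * (ω : ℂ))
      = (if k = 0 then (2 : ℂ) else 0) * Complex.exp (-Complex.I * (k : ℂ) * (ω : ℂ))
        - (∑ p ∈ Finset.univ.filter (fun p : Fin (s + 1) × Fin (s + 1) =>
            ((p.1 : ℕ) : ℤ) - ((p.2 : ℕ) : ℤ) = k ∧ (lam : ℤ) ∣ k),
            ((h p.1 : ℂ) * (h p.2 : ℂ))) * Complex.exp (-Complex.I * (k : ℂ) * (ω : ℂ)) := by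
    intro k
    rw [← sub_mul]
    congr 1
    unfold aCoef
    push_cast [apply_ite (fun x : ℝ => (x : ℂ))]
    ring
  rw [Finset.sum_congr rfl fun k _ => hterm k, Finset.sum_sub_distrib]
  congr 1
  · -- first sum is 2
    have h1 : ∀ k ∈ Finset.Icc (-(s : ℤ)) (s : ℤ),
        (if k = 0 then (2 : ℂ) else 0) * Complex.exp (-Complex.I * (k : ℂ) * (ω : ℂ))
          = if k = 0 then (2 : ℂ) * Complex.exp (-Complex.I * (k : ℂ) * (ω : ℂ)) else 0 :=
      fun k _ => by split_ifs <;> simp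
    rw [Finset.sum_congr rfl h1, Finset.sum_ite_eq' (Finset.Icc (-(s : ℤ)) (s : ℤ)) 0
      (fun k => (2 : ℂ) * Complex.exp (-Complex.I * (k : ℂ) * (ω : ℂ)))]
    rw [if_pos (by simp [Finset.mem_Icc])]
    norm_num
  · -- second sum
    calc ∑ k ∈ Finset.Icc (-(s : ℤ)) (s : ℤ),
          (∑ p ∈ Finset.univ.filter (fun p : Fin (s + 1) × Fin (s + 1) =>
              ((p.1 : ℕ) : ℤ) - ((p.2 : ℕ) : ℤ) = k ∧ (lam : ℤ) ∣ k),
            ((h p.1 : ℂ) * (h p.2 : ℂ))) * Complex.exp (-Complex.I * (k : ℂ) * (ω : ℂ))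
        = ∑ k ∈ Finset.Icc (-(s : ℤ)) (s : ℤ), ∑ p : Fin (s + 1) × Fin (s + 1),
            (if ((p.1 : ℕ) : ℤ) - ((p.2 : ℕ) : ℤ) = k ∧ (lam : ℤ) ∣ k then
              ((h p.1 : ℂ) * (h p.2 : ℂ)) * Complex.exp (-Complex.I * (k : ℂ) * (ω : ℂ))
            else 0) := by
          refine Finset.sum_congr rfl fun k _ => ?_
          rw [Finset.sum_mul, Finset.sum_filter]
      _ = ∑ p : Fin (s + 1) × Fin (s + 1), ∑ k ∈ Finset.Icc (-(s : ℤ)) (s : ℤ),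
            (if ((p.1 : ℕ) : ℤ) - ((p.2 : ℕ) : ℤ) = k ∧ (lam : ℤ) ∣ k then
              ((h p.1 : ℂ) * (h p.2 : ℂ)) * Complex.exp (-Complex.I * (k : ℂ) * (ω : ℂ))
            else 0) := Finset.sum_comm
      _ = _ := by
          refine Finset.sum_congr rfl fun p _ => ?_
          set n : ℤ := ((p.1 : ℕ) : ℤ) - ((p.2 : ℕ) : ℤ) with hn
          have h2 : ∀ k ∈ Finset.Icc (-(s : ℤ)) (s : ℤ),
              (if n = k ∧ (lam : ℤ) ∣ k then
                ((h p.1 : ℂ) * (h p.2 : ℂ)) * Complex.exp (-Complex.I * (k : ℂ) * (ω : ℂ))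
              else 0)
              = if k = n then (if (lam : ℤ) ∣ n then
                  ((h p.1 : ℂ) * (h p.2 : ℂ)) * Complex.exp (-Complex.I * (k : ℂ) * (ω : ℂ))
                else 0) else 0 := by
            intro k _
            rw [← ite_and]
            refine if_congr ⟨fun ⟨h1, h2⟩ => ⟨h1.symm, h1 ▸ h2⟩,
              fun ⟨h1, h2⟩ => ⟨h1.symm, h1.symm ▸ h2⟩⟩ rfl rfl
          have hmemIcc : n ∈ Finset.Icc (-(s : ℤ)) (s : ℤ) := by
            simp only [Finset.mem_Icc, hn]
            have := p.1.isLt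
            have := p.2.isLt
            omega
          rw [Finset.sum_congr rfl h2, Finset.sum_ite_eq' (Finset.Icc (-(s : ℤ)) (s : ℤ)) n
            (fun k => if (lam : ℤ) ∣ n then
              ((h p.1 : ℂ) * (h p.2 : ℂ)) * Complex.exp (-Complex.I * (k : ℂ) * (ω : ℂ))
            else 0), if_pos hmemIcc]


end FejerRieszHelpers

/-- `2 − H*(e^{iλω})H(e^{iλω})` is a real trigonometric
polynomial of the form `Σ_{k=−s}^{s} a(k) e^{−ikω}`; and if it is positive
everywhere, Fejér–Riesz yields `m(e^{iλω}) = Σ_{k=0}^{s} b(k) e^{−ikω}` with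
`|m(e^{iλω})|² = 2 − H*(e^{iλω})H(e^{iλω})`, so the mask `m(e^{iλω})τ(ω)` of
the scaled filter `m(z)H(z)` has (filter) support contained in `{0, …, 2s}`. -/
theorem scaled_filter_support (lam s : ℕ) (hlam : 2 ≤ lam)
    (h : Fin (s + 1) → ℝ) :
    (∃ a : ℤ → ℝ, ∀ ω : ℝ,
      ((G1D lam s h ω : ℝ) : ℂ) =
        ∑ k ∈ Finset.Icc (-(s : ℤ)) (s : ℤ),
          (a k : ℂ) * Complex.exp (-Complex.I * (k : ℂ) * (ω : ℂ))) ∧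
    ((∀ ω : ℝ, 0 < G1D lam s h ω) →
      ∃ b : ℕ → ℂ,
        (∀ ω : ℝ,
          Complex.normSq (∑ k ∈ Finset.range (s + 1),
            b k * Complex.exp (-Complex.I * (k : ℂ) * (ω : ℂ))) = G1D lam s h ω) ∧
        ∃ c : ℕ → ℂ, ∀ ω : ℝ,
          (∑ k ∈ Finset.range (s + 1),
              b k * Complex.exp (-Complex.I * (k : ℂ) * (ω : ℂ))) *
            mask1D lam s h ω =
          ((1 / Real.sqrt lam : ℝ) : ℂ) *
            ∑ k ∈ Finset.range (2 * s + 1),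
              c k * Complex.exp (-Complex.I * (k : ℂ) * (ω : ℂ))) := by
  classical
  refine ⟨⟨aCoef lam s h, G1D_eq lam s hlam h⟩, fun hpos => ?_⟩
  obtain ⟨b, hb⟩ := fejer_riesz s (aCoef lam s h) (aCoef_symm lam s h)
    (G1D lam s h) (G1D_eq lam s hlam h) hpos
  refine ⟨b, hb, ?_⟩
  set Bp : Polynomial ℂ := ∑ k ∈ Finset.range (s + 1), Polynomial.C (b k) * Polynomial.X ^ k
    with hBp
  set Hp : Polynomial ℂ := ∑ k : Fin (s + 1), Polynomial.C ((h k : ℝ) : ℂ) * Polynomial.X ^ (k : ℕ)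
    with hHp
  have hdegBp : Bp.natDegree ≤ s := by
    rw [hBp]
    refine Polynomial.natDegree_sum_le_of_forall_le _ _ fun k hk => ?_
    refine le_trans (Polynomial.natDegree_C_mul_le _ _) ?_
    rw [Polynomial.natDegree_X_pow]
    exact Nat.lt_succ_iff.1 (Finset.mem_range.1 hk)
  have hdegHp : Hp.natDegree ≤ s := by
    rw [hHp]
    refine Polynomial.natDegree_sum_le_of_forall_le _ _ fun k _ => ?_
    refine le_trans (Polynomial.natDegree_C_mul_le _ _) ?_
    rw [Polynomial.natDegree_X_pow]
    exact Nat.lt_succ_iff.1 k.isLt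
  have hdegMul : (Bp * Hp).natDegree < 2 * s + 1 := by
    have := Polynomial.natDegree_mul_le (p := Bp) (q := Hp)
    omega
  refine ⟨fun k => (Bp * Hp).coeff k, fun ω => ?_⟩
  set z : ℂ := Complex.exp (-Complex.I * (ω : ℂ)) with hz
  have hBe : ∑ k ∈ Finset.range (s + 1), b k * Complex.exp (-Complex.I * (k : ℂ) * (ω : ℂ))
      = Bp.eval z := by
    rw [hBp, Polynomial.eval_finset_sum]
    refine Finset.sum_congr rfl fun k _ => ?_
    rw [Polynomial.eval_mul, Polynomial.eval_C, Polynomial.eval_pow, Polynomial.eval_X, expk]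
  have hHe : mask1D lam s h ω = ((1 / Real.sqrt lam : ℝ) : ℂ) * Hp.eval z := by
    unfold mask1D
    congr 1
    rw [hHp, Polynomial.eval_finset_sum]
    refine Finset.sum_congr rfl fun k _ => ?_
    rw [Polynomial.eval_mul, Polynomial.eval_C, Polynomial.eval_pow, Polynomial.eval_X, expk]
  rw [hBe, hHe]
  rw [show Bp.eval z * (((1 / Real.sqrt lam : ℝ) : ℂ) * Hp.eval z)
      = ((1 / Real.sqrt lam : ℝ) : ℂ) * (Bp.eval z * Hp.eval z) by ring]
  congr 1
  rw [← Polynomial.eval_mul, Polynomial.eval_eq_sum_range' hdegMul]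
  refine Finset.sum_congr rfl fun k _ => ?_
  rw [expk]
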